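/- If G is a minimally 2-connected simple graph and u and v are adjacent vertices each of degree at least 3 in G, then the maximum number of internally disjoint u–v paths in G is exactly 2. -/

import Mathlib

namespace SimpleGraph

variable {V : Type*}

/-- A simple graph is `2`-connected if it has at least `3` vertices and
deleting any single vertex leaves a connected graph. -/
def TwoConnected [Fintype V] (G : SimpleGraph V) : Prop :=
  3 ≤ Fintype.card V ∧ ∀ x : V, (G.induce {y | y ≠ x}).Connected

/-- A simple graph is minimally `2`-connected if it is `2`-connected and the deletion of
any edge yields a graph that is not `2`-connected. -/
def MinimallyTwoConnected [Fintype V] (G : SimpleGraph V) : Prop :=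
  G.TwoConnected ∧ ∀ e ∈ G.edgeSet, ¬ (G.deleteEdges {e}).TwoConnected

/-- Two `u`–`v` walks are internally disjoint if they share no vertex besides `u` and `v`
and share no edge. -/
def IntDisjoint (G : SimpleGraph V) {u v : V} (p q : G.Walk u v) : Prop :=
  (∀ w ∈ p.support, w ∈ q.support → w = u ∨ w = v) ∧ ∀ e ∈ p.edges, e ∉ q.edges

/-- `κ_G(u,v)`: the maximum number of pairwise internally disjoint `u`–`v` paths in `G`. -/
noncomputable def kappa (G : SimpleGraph V) (u v : V) : ℕ :=
  sSup {k | ∃ p : Fin k → G.Walk u v, (∀ i, (p i).IsPath) ∧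
    ∀ i j, i ≠ j → G.IntDisjoint (p i) (p j)}

/-- The average connectivity of `G`: the average of `κ_G(u,v)` over all unordered pairs of
distinct vertices (computed here as the sum over ordered pairs divided by `n(n-1)`). -/
noncomputable def avgKappa [Fintype V] [DecidableEq V] (G : SimpleGraph V) : ℚ :=
  (∑ p ∈ Finset.univ.offDiag, (G.kappa p.1 p.2 : ℚ)) /
    ((Fintype.card V : ℚ) * ((Fintype.card V : ℚ) - 1))

end SimpleGraph

open SimpleGraph in
lemma walk_induce_reach {V : Type*} (G : SimpleGraph V) (s : Set V) {a b : V}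
    (p : G.Walk a b) (hs : ∀ w ∈ p.support, w ∈ s) (ha : a ∈ s) (hb : b ∈ s) :
    (G.induce s).Reachable ⟨a, ha⟩ ⟨b, hb⟩ := by
  induction p with
  | nil => exact Reachable.refl _
  | @cons x y _ hxy q ih =>
    have hy : y ∈ s := hs y (by simp)
    refine (Adj.reachable (v := (⟨y, hy⟩ : s)) ?_).trans (ih (fun w hw => hs w (by simp [hw])) hy hb)
    simpa using hxy

open SimpleGraph in
lemma reach_transfer {V : Type*} (G : SimpleGraph V) {u v x : V}
    (hux : u ≠ x) (hvx : v ≠ x)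
    (hr : ((G.deleteEdges {s(u,v)}).induce {y | y ≠ x}).Reachable ⟨u, hux⟩ ⟨v, hvx⟩)
    (a b : {y | y ≠ x}) (hab : (G.induce {y | y ≠ x}).Reachable a b) :
    ((G.deleteEdges {s(u,v)}).induce {y | y ≠ x}).Reachable a b := by
  obtain ⟨p⟩ := hab
  induction p with
  | nil => exact Reachable.refl _
  | @cons c d _ hcd q ih =>
    refine Reachable.trans ?_ ih
    have hcd' : G.Adj (c : V) (d : V) := by simpa using hcd
    by_cases he : s((c : V), (d : V)) = s(u, v)
    · rw [Sym2.eq_iff] at he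
      rcases he with ⟨h1, h2⟩ | ⟨h1, h2⟩
      · have hc : c = (⟨u, hux⟩ : {y | y ≠ x}) := Subtype.ext h1
        have hd : d = (⟨v, hvx⟩ : {y | y ≠ x}) := Subtype.ext h2
        rw [hc, hd]; exact hr
      · have hc : c = (⟨v, hvx⟩ : {y | y ≠ x}) := Subtype.ext h1
        have hd : d = (⟨u, hux⟩ : {y | y ≠ x}) := Subtype.ext h2
        rw [hc, hd]; exact hr.symm
    · exact Adj.reachable (by simp [he, hcd'])

open SimpleGraph in
lemma induce_deleteEdges_eq {V : Type*} (G : SimpleGraph V) {u v : V} (s : Set V)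
    (hs : u ∉ s ∨ v ∉ s) :
    (G.deleteEdges {s(u,v)}).induce s = G.induce s := by
  ext a b
  simp only [comap_adj, Function.Embedding.coe_subtype, deleteEdges_adj, Set.mem_singleton_iff,
    and_iff_left_iff_imp]
  intro _ he
  rw [Sym2.eq_iff] at he
  rcases he with ⟨h1, h2⟩ | ⟨h1, h2⟩ <;> rcases hs with hs | hs
  · exact hs (h1 ▸ a.2)
  · exact hs (h2 ▸ b.2)
  · exact hs (h2 ▸ b.2)
  · exact hs (h1 ▸ a.2)


open SimpleGraph

/-- If `G` is a minimally `2`-connected simple graph and `u` and `v` are adjacent vertices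
of degree at least `3`, then `κ_G(u,v) = 2`. -/
theorem stmt_4 {V : Type*} [Fintype V] [DecidableEq V] (G : SimpleGraph V)
    [DecidableRel G.Adj] (h : G.MinimallyTwoConnected)
    (u v : V) (huv : G.Adj u v) (hu : 3 ≤ G.degree u) (hv : 3 ≤ G.degree v) :
    G.kappa u v = 2 := by
  classical
  set S := {k | ∃ p : Fin k → G.Walk u v, (∀ i, (p i).IsPath) ∧
    ∀ i j, i ≠ j → G.IntDisjoint (p i) (p j)} with hS
  -- construct second path
  obtain ⟨w, hwmem, hwv⟩ : ∃ w ∈ G.neighborFinset u, w ≠ v := by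
    refine Finset.exists_mem_ne ?_ v
    rw [card_neighborFinset_eq_degree]; omega
  have hw : G.Adj u w := by simpa using hwmem
  have hwu : w ≠ u := hw.ne'
  have hvu : v ≠ u := huv.ne'
  obtain ⟨q0⟩ : (G.induce {y | y ≠ u}).Reachable ⟨w, hwu⟩ ⟨v, hvu⟩ :=
    (h.1.2 u).preconnected _ _
  let q : G.Walk w v := q0.map (SimpleGraph.Embedding.induce {y | y ≠ u}).toHom
  have hqsup : u ∉ q.support := by
    show u ∉ (q0.map (SimpleGraph.Embedding.induce {y | y ≠ u}).toHom).support
    rw [Walk.support_map, List.mem_map]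
    rintro ⟨⟨z, hz⟩, -, hzz⟩
    exact hz (by simpa using hzz)
  have hqe : s(u, v) ∉ q.edges := fun he => hqsup (q.fst_mem_support_of_mem_edges he)
  let W : G.Walk u v := Walk.cons hw q
  have hWe : s(u, v) ∉ W.edges := by
    simp only [W, Walk.edges_cons, List.mem_cons]
    rintro (he | he)
    · rw [Sym2.eq_iff] at he
      rcases he with ⟨-, h2⟩ | ⟨-, h2⟩
      · exact hwv h2.symm
      · exact hvu h2
    · exact hqe he
  let P1 : G.Walk u v := W.toPath
  have hP1 : P1.IsPath := W.toPath.2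
  have hP1e : s(u, v) ∉ P1.edges := fun he => hWe (W.edges_toPath_subset he)
  let P0 : G.Walk u v := Walk.cons huv Walk.nil
  have hP0 : P0.IsPath := by simp [P0, huv.ne]
  have hP0sup : P0.support = [u, v] := rfl
  have hP0e : P0.edges = [s(u, v)] := rfl
  have hd01 : G.IntDisjoint P0 P1 := by
    constructor
    · intro z hz _
      rw [hP0sup] at hz; simpa using hz
    · intro e he
      rw [hP0e] at he; simp at he; subst he; exact hP1e
  have hd10 : G.IntDisjoint P1 P0 := by
    constructor
    · intro z _ hz
      rw [hP0sup] at hz; simpa using hz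
    · intro e he hc
      rw [hP0e] at hc; simp at hc; subst hc; exact hP1e he
  have h2S : 2 ∈ S := by
    refine ⟨![P0, P1], ?_, ?_⟩
    · intro i; fin_cases i <;> simpa using (by first | exact hP0 | exact hP1)
    · intro i j hij; fin_cases i <;> fin_cases j <;> simp_all <;>
        first | exact hd01 | exact hd10
  have hub : ∀ k ∈ S, k ≤ 2 := by
    intro k hk
    by_contra hk2
    push_neg at hk2
    obtain ⟨p, hpath, hdisj⟩ := hk
    have h3 : 3 ≤ k := hk2
    have h01 : (⟨0, by omega⟩ : Fin k) ≠ ⟨1, by omega⟩ := by simp [Fin.ext_iff]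
    have h02 : (⟨0, by omega⟩ : Fin k) ≠ ⟨2, by omega⟩ := by simp [Fin.ext_iff]
    have h12 : (⟨1, by omega⟩ : Fin k) ≠ ⟨2, by omega⟩ := by simp [Fin.ext_iff]
    apply h.2 s(u,v) huv
    refine ⟨h.1.1, fun x => ?_⟩
    by_cases hxu : x = u
    · subst hxu
      rw [induce_deleteEdges_eq G _ (Or.inl (by simp))]
      exact h.1.2 x
    by_cases hxv : x = v
    · subst hxv
      rw [induce_deleteEdges_eq G _ (Or.inr (by simp))]
      exact h.1.2 x
    have hA : ∀ i j, i ≠ j → x ∈ (p i).support → x ∉ (p j).support := by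
      intro i j hij hi hj
      rcases (hdisj i j hij).1 x hi hj with rfl | rfl
      · exact hxu rfl
      · exact hxv rfl
    have hB : ∀ i j, i ≠ j → s(u,v) ∈ (p i).edges → s(u,v) ∉ (p j).edges :=
      fun i j hij hi => (hdisj i j hij).2 _ hi
    obtain ⟨i, hiA, hiB⟩ : ∃ i, x ∉ (p i).support ∧ s(u,v) ∉ (p i).edges := by
      by_cases h0 : x ∈ (p ⟨0, by omega⟩).support
      · by_cases h1 : s(u,v) ∈ (p ⟨1, by omega⟩).edges
        · exact ⟨⟨2, by omega⟩, hA _ _ h02 h0, hB _ _ h12 h1⟩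
        · exact ⟨⟨1, by omega⟩, hA _ _ h01 h0, h1⟩
      · by_cases h0' : s(u,v) ∈ (p ⟨0, by omega⟩).edges
        · by_cases h1 : x ∈ (p ⟨1, by omega⟩).support
          · exact ⟨⟨2, by omega⟩, hA _ _ h12 h1, hB _ _ h02 h0'⟩
          · exact ⟨⟨1, by omega⟩, h1, hB _ _ h01 h0'⟩
        · exact ⟨⟨0, by omega⟩, h0, h0'⟩
    have hux : u ≠ x := fun hh => hxu hh.symm
    have hvx : v ≠ x := fun hh => hxv hh.symm
    have hpd : ∀ e ∈ (p i).edges, e ∉ ({s(u,v)} : Set (Sym2 V)) := by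
      intro e he hee
      rw [Set.mem_singleton_iff] at hee
      subst hee
      exact hiB he
    let pd : (G.deleteEdges {s(u,v)}).Walk u v := (p i).toDeleteEdges _ hpd
    have hpdsup : ∀ z ∈ pd.support, z ∈ {y | y ≠ x} := by
      intro z hz
      have hz' : z ∈ (p i).support := by
        rwa [Walk.support_transfer] at hz
      exact fun hzz => hiA (hzz ▸ hz')
    have hr := walk_induce_reach (G.deleteEdges {s(u,v)}) {y | y ≠ x} pd hpdsup hux hvx
    have hc := h.1.2 x
    have : Nonempty ({y | y ≠ x} : Set V) := hc.nonempty
    exact ⟨fun a b => reach_transfer G hux hvx hr a b (hc.preconnected a b)⟩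
  have hbdd : BddAbove S := ⟨2, fun k hk => hub k hk⟩
  exact le_antisymm (csSup_le ⟨2, h2S⟩ hub) (le_csSup hbdd h2S)
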